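/- Let d ≥ 2, a_c = (d-2)/2, a < a_c, and for a < b < a+1 set p = 2d/(d-2+2(b-a)), α = (1+a-b)(a_c-a)/(a_c-a+b), n = 2p/(p-2). Then the condition b < b_FS(a) := d(a_c−a)/(2√((a_c−a)² + d−1)) + a − a_c is equivalent to α > α_FS := √((d−1)/(n−1)). -/

import Mathlib

lemma fs_aux (D A t s S : ℝ) (hA : 0 ≤ A) (ht : 0 < t) (hs0 : 0 < s) (hs1 : s < 1)
    (hD : 0 < D) (hDA : D = 2 * A + 1) (hS : 0 < S) (hSsq : S ^ 2 = t ^ 2 + D) :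
    A + s < (2 * A + 2) * t / (2 * S) ↔ D / ((D + s) / (1 - s)) < ((1 - s) * t / (A + s)) ^ 2 := by
  have hAs : 0 < A + s := by linarith
  have h1s : 0 < 1 - s := by linarith
  have hDs : 0 < D + s := by linarith
  have h3 : ((A + s) * (2 * S)) ^ 2 = 4 * (A + s) ^ 2 * (t ^ 2 + D) := by
    rw [mul_pow, mul_pow, hSsq]; ring
  rw [lt_div_iff₀ (by positivity), div_div_eq_mul_div, div_pow,
    div_lt_div_iff₀ hDs (by positivity)]
  subst hDA
  constructor
  · intro h
    have h2 : ((A + s) * (2 * S)) ^ 2 < ((2 * A + 2) * t) ^ 2 :=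
      pow_lt_pow_left₀ h (by positivity) (by norm_num)
    have hK : (2 * A + 1) * (A + s) ^ 2 < (1 - s) * ((2 * A + 1) + s) * t ^ 2 := by
      nlinarith [h2, h3]
    nlinarith [mul_lt_mul_of_pos_left hK h1s]
  · intro h
    have hK : (2 * A + 1) * (A + s) ^ 2 < (1 - s) * ((2 * A + 1) + s) * t ^ 2 := by
      nlinarith [h, mul_pos h1s h1s]
    have h2 : ((A + s) * (2 * S)) ^ 2 < ((2 * A + 2) * t) ^ 2 := by
      nlinarith [hK, h3]
    exact lt_of_pow_lt_pow_left₀ 2 (by positivity) h2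

theorem felli_schneider_region_equivalence (d : ℕ) (hd : 2 ≤ d) (a b p α n : ℝ)
    (ha : a < ((d : ℝ) - 2) / 2) (hab : a < b) (hba : b < a + 1)
    (hp : p = 2 * d / ((d : ℝ) - 2 + 2 * (b - a)))
    (hα : α = (1 + a - b) * (((d : ℝ) - 2) / 2 - a) / (((d : ℝ) - 2) / 2 - a + b))
    (hn : n = 2 * p / (p - 2)) :
    b < (d : ℝ) * (((d : ℝ) - 2) / 2 - a) /
        (2 * Real.sqrt ((((d : ℝ) - 2) / 2 - a) ^ 2 + (d : ℝ) - 1)) + a - ((d : ℝ) - 2) / 2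
      ↔ α > Real.sqrt (((d : ℝ) - 1) / (n - 1)) := by
  have hd2 : (2:ℝ) ≤ (d:ℝ) := by exact_mod_cast hd
  set A : ℝ := ((d : ℝ) - 2) / 2 with hAdef
  have hA0 : 0 ≤ A := by rw [hAdef]; linarith
  have hdA : (d:ℝ) = 2 * A + 2 := by rw [hAdef]; ring
  set t : ℝ := A - a with htdef
  have ht : 0 < t := sub_pos.2 ha
  set s : ℝ := b - a with hsdef
  have hs0 : 0 < s := sub_pos.2 hab
  have hs1 : s < 1 := by rw [hsdef]; linarith
  have hAs : 0 < A + s := by linarith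
  have h1s : 0 < 1 - s := by linarith
  have hD : (0:ℝ) < (d:ℝ) - 1 := by linarith
  have hS2 : 0 < t ^ 2 + (d:ℝ) - 1 := by nlinarith
  set S := Real.sqrt (t ^ 2 + (d:ℝ) - 1) with hSdef
  have hS : 0 < S := Real.sqrt_pos.2 hS2
  have hSsq : S ^ 2 = t ^ 2 + ((d:ℝ) - 1) := by
    rw [hSdef]
    rw [Real.sq_sqrt hS2.le]; ring
  -- compute α
  have hα' : α = (1 - s) * t / (A + s) := by
    rw [hα]
    have e1 : t + b = A + s := by rw [htdef, hsdef]; ring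
    have e2 : 1 + a - b = 1 - s := by rw [hsdef]; ring
    rw [e1, e2]
  have hα0 : 0 < α := by
    rw [hα']; exact div_pos (mul_pos h1s ht) hAs
  -- compute n
  have hne1 : A + s ≠ 0 := hAs.ne'
  have hne2 : (2:ℝ) - 2 * s ≠ 0 := ne_of_gt (by linarith)
  have hne3 : (1:ℝ) - s ≠ 0 := ne_of_gt h1s
  have hden2 : (d:ℝ) - 2 + 2 * s = 2 * (A + s) := by rw [hsdef, hAdef]; ring
  have hp' : p = (d:ℝ) / (A + s) := by
    rw [hp, hden2, mul_div_mul_left _ _ (two_ne_zero)]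
  have hp2 : p - 2 = (2 - 2 * s) / (A + s) := by
    rw [hp', hdA]; field_simp; ring
  have hn' : n = (d:ℝ) / (1 - s) := by
    rw [hn, hp2, hp']; field_simp
  have hn1 : n - 1 = ((d:ℝ) - 1 + s) / (1 - s) := by
    rw [hn']; field_simp; ring
  have hiff := fs_aux ((d:ℝ) - 1) A t s S hA0 ht hs0 hs1 hD (by rw [hAdef]; ring) hS hSsq
  have hL : (b < (d:ℝ) * t / (2 * S) + a - A) ↔ A + s < (2 * A + 2) * t / (2 * S) := by
    rw [← hdA]
    constructor <;> intro h <;> [linarith [hsdef]; linarith [hsdef]]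
  rw [gt_iff_lt, Real.sqrt_lt' hα0, hn1, hα']
  exact hL.trans hiff
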